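/- Let K ⊂ ℝ be a nonempty compact set (d = 1) and let ψ be a feedforward neural network with depth L ∈ ℕ, widths w_i ∈ ℕ, in which all activation functions are equal to a single function σ ∈ C(ℝ). Then for every ε > 0 and every nonempty open interval I ⊂ ℝ there exists a function σ̃ ∈ C(ℝ) such that σ̃(s) = σ(s) for all s ∈ ℝ \ I, such that |σ(s) − σ̃(s)| < ε for all s ∈ ℝ, and such that the network ψ̃ obtained by replacing σ with σ̃ in every layer satisfies: the image Ψ̃(D) of its parameter-to-function map is dense in C(K). -/

import Mathlib

open scoped BigOperators ENNReal NNReal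

/-- Parameter space `D` of a feedforward network with `L` hidden layers and width
function `w` (`w 0 = d` is the input dimension, hidden layer `i` has width `w i` for
`i = 1, …, L`, and the output layer has width one). The component for `i : Fin L`
consists of the weight matrix `A_{i+1}` and the bias vector `b_{i+1}`; the last
component consists of the output weights `A_{L+1}` and the output bias `b_{L+1}`. -/
abbrev Params (w : ℕ → ℕ) (L : ℕ) : Type :=
  (∀ i : Fin L, ((Fin (w (i + 1)) → Fin (w i) → ℝ) × (Fin (w (i + 1)) → ℝ))) ×
    ((Fin (w L) → ℝ) × ℝ)

/-- The number of degrees of freedom `m = Σ_{i=1}^{L+1} w_i (w_{i-1} + 1)` of the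
network (with `w_{L+1} = 1`). -/
def mdim (w : ℕ → ℕ) (L : ℕ) : ℕ :=
  (∑ i ∈ Finset.range L, w (i + 1) * (w i + 1)) + (w L + 1)

/-- Output of the first `k` hidden layers of the network. -/
noncomputable def hiddenOut (σ : ℕ → ℝ → ℝ) (w : ℕ → ℕ) (L : ℕ)
    (θ : ∀ i : Fin L, ((Fin (w (i + 1)) → Fin (w i) → ℝ) × (Fin (w (i + 1)) → ℝ))) :
    ∀ k : ℕ, k ≤ L → (Fin (w 0) → ℝ) → Fin (w k) → ℝ
  | 0, _, x => x
  | k + 1, h, x => fun i =>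
      σ (k + 1)
        ((∑ j, (θ ⟨k, h⟩).1 i j * hiddenOut σ w L θ k (Nat.le_of_succ_le h) x j) +
          (θ ⟨k, h⟩).2 i)

/-- The scalar output `ψ(α, x)` of the feedforward network. -/
noncomputable def netFun (σ : ℕ → ℝ → ℝ) (w : ℕ → ℕ) (L : ℕ) (α : Params w L)
    (x : Fin (w 0) → ℝ) : ℝ :=
  (∑ j, α.2.1 j * hiddenOut σ w L α.1 L le_rfl x j) + α.2.2

lemma continuous_hiddenOut {σ : ℕ → ℝ → ℝ} {w : ℕ → ℕ} {L : ℕ}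
    (hσ : ∀ i, 1 ≤ i → i ≤ L → Continuous (σ i))
    (θ : ∀ i : Fin L, ((Fin (w (i + 1)) → Fin (w i) → ℝ) × (Fin (w (i + 1)) → ℝ))) :
    ∀ (k : ℕ) (h : k ≤ L), Continuous fun x => hiddenOut σ w L θ k h x := by
  intro k
  induction k with
  | zero =>
      intro h
      simp only [hiddenOut]
      exact continuous_id'
  | succ k ih =>
      intro h
      apply continuous_pi
      intro i
      simp only [hiddenOut]
      exact (hσ (k + 1) (Nat.succ_le_succ (Nat.zero_le _)) h).comp
        ((continuous_finset_sum _ fun j _ =>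
          continuous_const.mul ((continuous_apply j).comp (ih (Nat.le_of_succ_le h)))).add
          continuous_const)

lemma continuous_netFun {σ : ℕ → ℝ → ℝ} {w : ℕ → ℕ} {L : ℕ}
    (hσ : ∀ i, 1 ≤ i → i ≤ L → Continuous (σ i)) (α : Params w L) :
    Continuous fun x => netFun σ w L α x := by
  unfold netFun
  exact (continuous_finset_sum _ fun j _ =>
    continuous_const.mul
      ((continuous_apply j).comp (continuous_hiddenOut hσ α.1 L le_rfl))).add continuous_const

/-- The parameter-to-realization map `Ψ : D → C(K)`. -/
noncomputable def Psi (σ : ℕ → ℝ → ℝ) (w : ℕ → ℕ) (L : ℕ)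
    (hσ : ∀ i, 1 ≤ i → i ≤ L → Continuous (σ i)) (K : Set (Fin (w 0) → ℝ))
    (α : Params w L) : C(K, ℝ) :=
  ⟨fun x => netFun σ w L α x, (continuous_netFun hσ α).comp continuous_subtype_val⟩

/-- The affine function `z_{a,c} : x ↦ aᵀ x + c` as an element of `C(K)`. -/
noncomputable def affineCM {n : ℕ} (K : Set (Fin n → ℝ)) (a : Fin n → ℝ) (c : ℝ) :
    C(K, ℝ) :=
  ⟨fun x => (∑ j, a j * (x : Fin n → ℝ) j) + c,
    (continuous_finset_sum _ fun j _ =>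
      continuous_const.mul ((continuous_apply j).comp continuous_subtype_val)).add
      continuous_const⟩

/-- The constant function `z_c : x ↦ c` as an element of `C(K)`. -/
noncomputable def constCM {n : ℕ} (K : Set (Fin n → ℝ)) (c : ℝ) : C(K, ℝ) :=
  ⟨fun _ => c, continuous_const⟩

/-- A function `ℝ → ℝ` is nonpolynomial if it is not the restriction of a polynomial. -/
def IsNonpolynomial (σ : ℝ → ℝ) : Prop :=
  ¬ ∃ p : Polynomial ℝ, ∀ x : ℝ, σ x = p.eval x

/-- `𝓛` is Gâteaux differentiable in its first argument at `(v, y)` with partial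
derivative (identified with an element of `M(K) = C(K)*`) given by the continuous
linear functional `T`. -/
def HasGateauxDerivFirst {n : ℕ} {K : Set (Fin n → ℝ)}
    (𝓛 : C(K, ℝ) → C(K, ℝ) → ℝ) (v y : C(K, ℝ)) (T : C(K, ℝ) →L[ℝ] ℝ) : Prop :=
  ∀ h : C(K, ℝ), Filter.Tendsto (fun s : ℝ => (𝓛 (v + s • h) y - 𝓛 v y) / s)
    (nhdsWithin 0 (Set.Ioi 0)) (nhds (T h))

section WIN

/-- tent bump: `1` on `[m-h/2, m+h/2]`, `0` outside `(m-h, m+h)`. -/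
noncomputable def bump (m h t : ℝ) : ℝ := max 0 (min 1 (2 - 2 * |t - m| / h))

lemma bump_continuous (m h : ℝ) : Continuous (bump m h) := by
  unfold bump
  exact continuous_const.max (continuous_const.min (by fun_prop))

lemma bump_nonneg (m h t : ℝ) : 0 ≤ bump m h t := le_max_left _ _

lemma bump_le_one (m h t : ℝ) : bump m h t ≤ 1 :=
  max_le zero_le_one (min_le_left _ _)

lemma bump_eq_one {m h t : ℝ} (hh : 0 < h) (ht : |t - m| ≤ h / 2) : bump m h t = 1 := by
  unfold bump
  have h1 : (1:ℝ) ≤ 2 - 2 * |t - m| / h := by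
    rw [le_sub_iff_add_le]
    have : 2 * |t - m| / h ≤ 1 := by
      rw [div_le_one hh]; linarith
    linarith
  rw [min_eq_left h1, max_eq_right zero_le_one]

lemma bump_eq_zero {m h t : ℝ} (hh : 0 < h) (ht : h ≤ |t - m|) : bump m h t = 0 := by
  unfold bump
  have h1 : 2 - 2 * |t - m| / h ≤ 0 := by
    have : (2:ℝ) ≤ 2 * |t - m| / h := by
      rw [le_div_iff₀ hh]; linarith
    linarith
  rw [max_eq_left]
  exact le_trans (min_le_right _ _) h1

/-- window perturbation -/
noncomputable def winfun (σ F : ℝ → ℝ) (m h δ lam t : ℝ) : ℝ :=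
  bump m h t * (σ m - σ t + δ * F ((t - m) / lam))

lemma winfun_continuous (σ F : ℝ → ℝ) (hσ : Continuous σ) (hF : Continuous F)
    (m h δ lam : ℝ) : Continuous (fun t => winfun σ F m h δ lam t) := by
  unfold winfun
  exact (bump_continuous m h).mul
    ((continuous_const.sub hσ).add (continuous_const.mul (hF.comp (by fun_prop))))

lemma winfun_eq_zero (σ F : ℝ → ℝ) {m h t : ℝ} (δ lam : ℝ) (hh : 0 < h)
    (ht : h ≤ |t - m|) : winfun σ F m h δ lam t = 0 := by
  unfold winfun
  rw [bump_eq_zero hh ht, zero_mul]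

lemma winfun_core (σ F : ℝ → ℝ) {m h t : ℝ} (δ lam : ℝ) (hh : 0 < h)
    (ht : |t - m| ≤ h / 2) :
    winfun σ F m h δ lam t = σ m - σ t + δ * F ((t - m) / lam) := by
  unfold winfun
  rw [bump_eq_one hh ht, one_mul]

lemma winfun_bound (σ F : ℝ → ℝ) {m h γ B : ℝ} (δ lam : ℝ) (hh : 0 < h)
    (hγ0 : 0 ≤ γ) (hB0 : 0 ≤ B)
    (hγ : ∀ s, |s - m| ≤ h → |σ m - σ s| ≤ γ)
    (hB : ∀ s, |s - m| ≤ h → |δ * F ((s - m) / lam)| ≤ B)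
    (t : ℝ) : |winfun σ F m h δ lam t| ≤ γ + B := by
  by_cases ht : |t - m| ≤ h
  · unfold winfun
    rw [abs_mul]
    calc |bump m h t| * |σ m - σ t + δ * F ((t - m) / lam)|
        ≤ 1 * (|σ m - σ t| + |δ * F ((t - m) / lam)|) := by
          apply mul_le_mul
          · rw [abs_of_nonneg (bump_nonneg m h t)]; exact bump_le_one m h t
          · exact abs_add_le _ _
          · exact abs_nonneg _
          · norm_num
      _ ≤ 1 * (γ + B) := by
          have := hγ t ht
          have := hB t ht
          nlinarith
      _ = γ + B := one_mul _
  · rw [winfun_eq_zero σ F δ lam hh (le_of_not_ge ht), abs_zero]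
    positivity

lemma pow_quarter_le {k l : ℕ} (h : k ≤ l) : ((1:ℝ)/4)^l ≤ ((1:ℝ)/4)^k :=
  pow_le_pow_of_le_one (by norm_num) (by norm_num) h

end WIN

lemma abs_tsum_le {f : ℕ → ℝ} {u : ℕ → ℝ} (hu : Summable u) (hb : ∀ n, |f n| ≤ u n) :
    |∑' n, f n| ≤ ∑' n, u n := by
  have hs : Summable fun n => ‖f n‖ :=
    Summable.of_nonneg_of_le (fun n => norm_nonneg _)
      (fun n => by simpa [Real.norm_eq_abs] using hb n) hu
  calc |∑' n, f n| = ‖∑' n, f n‖ := (Real.norm_eq_abs _).symm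
    _ ≤ ∑' n, ‖f n‖ := norm_tsum_le_tsum_norm hs
    _ ≤ ∑' n, u n := Summable.tsum_le_tsum (fun n => by simpa [Real.norm_eq_abs] using hb n) hs hu
section NET

variable {w : ℕ → ℕ} {L : ℕ}

lemma sum_w0_eq (hw0 : w 0 = 1) (g : Fin (w 0) → ℝ) :
    ∑ j, g j = g ⟨0, hw0 ▸ Nat.one_pos⟩ := by
  apply Finset.sum_eq_single_of_mem _ (Finset.mem_univ _)
  intro b _ hb
  exact absurd (Fin.ext (by omega : b.val = (⟨0, hw0 ▸ Nat.one_pos⟩ : Fin (w 0)).val)) hb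

lemma sum_const_fin (m : ℕ) (v : ℝ) : ∑ _j : Fin m, v = (m : ℝ) * v := by
  simp [Finset.sum_const, mul_comm]

lemma net_exists (hL : 0 < L) (hw0 : w 0 = 1)
    (hw : ∀ i, 1 ≤ i → i ≤ L → 0 < w i) (σt : ℝ → ℝ)
    (K : Set (Fin (w 0) → ℝ)) (R : ℝ)
    (hK : ∀ x ∈ K, |x ⟨0, hw0 ▸ Nat.one_pos⟩| ≤ R)
    (F : ℝ → ℝ) (M : ℝ) (hM0 : 0 ≤ M) (hFM : ∀ s, |s| ≤ R → |F s| ≤ M)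
    (m1 lam δ O1 mst S β Ost : ℝ) (hδ : 0 < δ) (hS : 0 < S) (hβ : 0 < β)
    (h1 : ∀ s, |s| ≤ R → σt (lam * s + m1) = O1 + δ * F s)
    (h2 : ∀ t, |t - mst| ≤ S → σt t = Ost + β * (t - mst)) :
    ∃ α : Params w L, ∀ x ∈ K, netFun (fun _ => σt) w L α x = F (x ⟨0, hw0 ▸ Nat.one_pos⟩) := by
  set e : Fin (w 0) := ⟨0, hw0 ▸ Nat.one_pos⟩
  set M' : ℝ := M + 1 with hM'
  have hM'pos : 0 < M' := by positivity
  have hδ' : δ ≠ 0 := ne_of_gt hδ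
  have hβ' : β ≠ 0 := ne_of_gt hβ
  have hM'' : M' ≠ 0 := ne_of_gt hM'pos
  set c : ℕ → ℝ := fun k => if k ≤ 1 then δ else β * S / M' with hc
  set O : ℕ → ℝ := fun k => if k ≤ 1 then O1 else Ost with hO
  set ρ : ℕ → ℝ := fun k => if k ≤ 2 then S / (δ * M') else 1 / β with hρ
  set θ : ∀ i : Fin L, ((Fin (w (i + 1)) → Fin (w i) → ℝ) × (Fin (w (i + 1)) → ℝ)) :=
    fun i => if i.val = 0 then (fun _ _ => lam, fun _ => m1)
      else (fun _ _ => ρ (i.val + 1) / (w i.val), fun _ => mst - ρ (i.val + 1) * O i.val)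
    with hθ
  have hcpos : ∀ k, 0 < c k := by
    intro k
    by_cases h : k ≤ 1 <;> simp [hc, h] <;> positivity
  have hMM' : M / M' ≤ 1 := by
    rw [div_le_one hM'pos]; simp [hM']
  -- main induction
  have main : ∀ k (hk1 : 1 ≤ k) (hk : k ≤ L), ∀ x ∈ K, ∀ i,
      hiddenOut (fun _ => σt) w L θ k hk x i = O k + c k * F (x e) := by
    intro k
    induction k with
    | zero => omega
    | succ k ih =>
      intro _ hk x hx i
      by_cases hk0 : k = 0
      · subst hk0
        simp only [hiddenOut]
        have hθ0 : (θ ⟨0, hk⟩) = (fun _ _ => lam, fun _ => m1) := by simp [hθ]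
        rw [hθ0]
        have hsum : (∑ j, lam * x j) = lam * x e := sum_w0_eq hw0 (fun j => lam * x j)
        rw [hsum, h1 (x e) (hK x hx)]
        simp [hc, hO]
      · -- k ≥ 1
        have hk1 : 1 ≤ k := Nat.one_le_iff_ne_zero.mpr hk0
        have hkL : k ≤ L := Nat.le_of_succ_le hk
        simp only [hiddenOut]
        have hθk : (θ ⟨k, hk⟩) = (fun _ _ => ρ (k + 1) / (w k), fun _ => mst - ρ (k + 1) * O k) := by
          simp [hθ, hk0]
        rw [hθk]
        have hwk : (0 : ℝ) < (w k : ℝ) := by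
          exact_mod_cast hw k hk1 hkL
        have hwk' : ((w k : ℝ)) ≠ 0 := ne_of_gt hwk
        have hsum : (∑ j, (ρ (k+1) / (w k)) * hiddenOut (fun _ => σt) w L θ k hkL x j)
            = ρ (k+1) * (O k + c k * F (x e)) := by
          have hterm : ∀ j, (ρ (k+1) / (w k)) * hiddenOut (fun _ => σt) w L θ k hkL x j
              = (ρ (k+1) / (w k)) * (O k + c k * F (x e)) := by
            intro j; rw [ih hk1 hkL x hx j]
          rw [Finset.sum_congr rfl fun j _ => hterm j, sum_const_fin]
          field_simp
        rw [hsum]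
        have harg : (ρ (k+1) * (O k + c k * F (x e)) + (mst - ρ (k+1) * O k))
            = mst + ρ (k+1) * c k * F (x e) := by ring
        rw [harg]
        have hFb : |F (x e)| ≤ M := hFM _ (hK x hx)
        have core : ∀ v : ℝ, v = S / M' → v * |F (x e)| ≤ S := by
          intro v hv
          rw [hv]
          calc S / M' * |F (x e)| ≤ S / M' * M := by
                apply mul_le_mul_of_nonneg_left hFb (by positivity)
            _ = S * (M / M') := by ring
            _ ≤ S * 1 := by apply mul_le_mul_of_nonneg_left hMM' hS.le
            _ = S := by ring
        have hbound : |ρ (k+1) * c k * F (x e)| ≤ S := by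
          by_cases h2k : k = 1
          · subst h2k
            have e1 : ρ (1+1) = S / (δ * M') := by simp [hρ]
            have e2 : c 1 = δ := by simp [hc]
            rw [abs_mul, e1, e2, abs_of_pos (by positivity)]
            have e3 : S / (δ * M') * δ = S / M' := by field_simp
            exact core _ e3
          · have hk2 : 2 ≤ k := by omega
            have hnle : ¬ (k + 1 ≤ 2) := by omega
            have hnle' : ¬ (k ≤ 1) := by omega
            have e1 : ρ (k+1) = 1 / β := by simp [hρ, hnle]
            have e2 : c k = β * S / M' := by simp [hc, hnle']
            rw [abs_mul, e1, e2, abs_of_pos (by positivity)]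
            have e3 : (1:ℝ) / β * (β * S / M') = S / M' := by field_simp; try ring
            exact core _ e3
        rw [h2 _ (by simpa using hbound)]
        have hn1 : ¬ (k + 1 ≤ 1) := by omega
        have hOk1 : O (k+1) = Ost := by simp [hO, hn1]
        have hck1 : c (k+1) = β * S / M' := by simp [hc, hn1]
        rw [hOk1, hck1]
        by_cases h2k : k = 1
        · subst h2k
          have e1 : ρ (1+1) = S / (δ * M') := by simp [hρ]
          have e2 : c 1 = δ := by simp [hc]
          rw [e1, e2]
          field_simp
          ring
        · have hnle : ¬ (k + 1 ≤ 2) := by omega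
          have hnle' : ¬ (k ≤ 1) := by omega
          have e1 : ρ (k+1) = 1 / β := by simp [hρ, hnle]
          have e2 : c k = β * S / M' := by simp [hc, hnle']
          rw [e1, e2]
          field_simp
          ring
  -- assemble
  refine ⟨(θ, (fun _ => 1 / ((w L : ℝ) * c L), - O L / c L)), ?_⟩
  intro x hx
  have hwL : (0 : ℝ) < (w L : ℝ) := by exact_mod_cast hw L hL le_rfl
  have hwL' : ((w L : ℝ)) ≠ 0 := ne_of_gt hwL
  have hcL : c L ≠ 0 := (hcpos L).ne'
  unfold netFun
  have hsum : (∑ j : Fin (w L), (1 / ((w L : ℝ) * c L)) * hiddenOut (fun _ => σt) w L θ L le_rfl x j)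
      = (1 / (c L)) * (O L + c L * F (x e)) := by
    have hterm : ∀ j, (1 / ((w L : ℝ) * c L)) * hiddenOut (fun _ => σt) w L θ L le_rfl x j
        = (1 / ((w L : ℝ) * c L)) * (O L + c L * F (x e)) := fun j => by
      rw [main L hL le_rfl x hx j]
    rw [Finset.sum_congr rfl fun j _ => hterm j, sum_const_fin]
    field_simp
  rw [hsum]
  field_simp
  ring

end NET
/-- **Lemma 5.4.** For `d = 1` (i.e. `w 0 = 1`) and a network all of whose
activation functions are equal to a single `σ ∈ C(ℝ)`: for every `ε > 0` and every
nonempty open interval `I = (a, b)` there exists `σ̃ ∈ C(ℝ)` that coincides with `σ`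
outside of `I`, is uniformly `ε`-close to `σ`, and is such that the network obtained
by replacing `σ` with `σ̃` has an image `Ψ̃(D)` that is dense in `C(K)`. -/
theorem dense_image_by_activation_perturbation
    (w : ℕ → ℕ) (L : ℕ) (hL : 0 < L) (hw0 : w 0 = 1) (hw : ∀ i, 1 ≤ i → i ≤ L → 0 < w i)
    (σ : ℝ → ℝ) (hσc : Continuous σ)
    (K : Set (Fin (w 0) → ℝ)) (hKne : K.Nonempty) (hKc : IsCompact K)
    (ε : ℝ) (hε : 0 < ε) (a b : ℝ) (hab : a < b) :
    ∃ (σt : ℝ → ℝ) (hσt : Continuous σt),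
      (∀ s : ℝ, s ∉ Set.Ioo a b → σt s = σ s) ∧
      (∀ s : ℝ, |σ s - σt s| < ε) ∧
      Dense (Set.range (Psi (fun _ => σt) w L (fun _ _ _ => hσt) K)) := by
  classical
  obtain ⟨e, he⟩ : ∃ e : Fin (w 0), e = ⟨0, hw0 ▸ Nat.one_pos⟩ := ⟨_, rfl⟩
  obtain ⟨q, hqdef⟩ : ∃ q : ℝ, q = b - a := ⟨_, rfl⟩
  have hqpos : 0 < q := by rw [hqdef]; linarith
  have hb' : b = a + q := by rw [hqdef]; ring
  haveI : CompactSpace ↥K := isCompact_iff_compactSpace.mp hKc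
  haveI : Nonempty ↥K := hKne.to_subtype
  -- dense sequence in C(K, ℝ)
  obtain ⟨u, hudense⟩ : ∃ u : ℕ → C(↥K, ℝ), DenseRange u :=
    ⟨TopologicalSpace.denseSeq C(↥K, ℝ), TopologicalSpace.denseRange_denseSeq _⟩
  -- Tietze extensions
  have hext : ∀ n : ℕ, ∃ G : C((Fin (w 0) → ℝ), ℝ), G.restrict K = u n := fun n =>
    ContinuousMap.exists_restrict_eq hKc.isClosed (u n)
  choose G hG using hext
  obtain ⟨F, hFdef⟩ : ∃ F : ℕ → ℝ → ℝ, F = fun n s => G n (fun _ => s) := ⟨_, rfl⟩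
  have hFcont : ∀ n, Continuous (F n) := fun n => by
    rw [hFdef]
    exact (G n).continuous.comp (continuous_pi fun _ => continuous_id)
  have hFval : ∀ n, ∀ x, ∀ hx : x ∈ K, F n (x e) = u n ⟨x, hx⟩ := by
    intro n x hx
    have hxx : (fun _ : Fin (w 0) => x e) = x := by
      funext j
      have hj := j.isLt
      have hje : j = e := by
        rw [he]
        exact Fin.ext (by omega)
      rw [hje]
    calc F n (x e) = G n x := by rw [hFdef]; simp only; rw [hxx]
      _ = (G n).restrict K ⟨x, hx⟩ := rfl
      _ = u n ⟨x, hx⟩ := by rw [hG n]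
  -- bound on K
  obtain ⟨C0, hC0⟩ := hKc.exists_bound_of_continuousOn (continuous_apply e).continuousOn
  obtain ⟨R, hRdef⟩ : ∃ R : ℝ, R = max C0 1 := ⟨_, rfl⟩
  have hRpos : 0 < R := by rw [hRdef]; exact lt_of_lt_of_le one_pos (le_max_right _ _)
  have hKR : ∀ x ∈ K, |x e| ≤ R := fun x hx => by
    rw [hRdef]
    exact le_trans (by simpa [Real.norm_eq_abs] using hC0 x hx) (le_max_left _ _)
  -- bounds on F n
  have hMex : ∀ n, ∃ Mn : ℝ, 0 ≤ Mn ∧ ∀ s : ℝ, |s| ≤ 2*R → |F n s| ≤ Mn := by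
    intro n
    obtain ⟨C, hC⟩ := (isCompact_Icc :
      IsCompact (Set.Icc (-(2*R)) (2*R))).exists_bound_of_continuousOn (hFcont n).continuousOn
    refine ⟨max C 0, le_max_right _ _, fun s hs => ?_⟩
    have hmem : s ∈ Set.Icc (-(2*R)) (2*R) := by
      obtain ⟨h1, h2⟩ := abs_le.mp hs
      exact ⟨by linarith, by linarith⟩
    exact le_trans (by simpa [Real.norm_eq_abs] using hC s hmem) (le_max_left _ _)
  choose M hM0 hMb using hMex
  -- uniform continuity modulus
  have hUC : ∀ γ : ℝ, 0 < γ → ∃ η : ℝ, 0 < η ∧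
      ∀ s ∈ Set.Icc a b, ∀ t ∈ Set.Icc a b, |s - t| ≤ η → |σ s - σ t| ≤ γ := by
    intro γ hγ
    have huc : UniformContinuousOn σ (Set.Icc a b) :=
      isCompact_Icc.uniformContinuousOn_of_continuous hσc.continuousOn
    rw [Metric.uniformContinuousOn_iff_le] at huc
    obtain ⟨η, hη, h⟩ := huc γ hγ
    exact ⟨η, hη, fun s hs t ht hst => by
      simpa [Real.dist_eq] using h s hs t ht (by simpa [Real.dist_eq] using hst)⟩
  obtain ⟨γf, hγf'⟩ : ∃ γf : ℕ → ℝ, ∀ n, γf n = ε/8 * (1/2)^n := ⟨_, fun _ => rfl⟩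
  have hγfpos : ∀ n, 0 < γf n := fun n => by rw [hγf' n]; positivity
  choose η hηpos hηuc using fun n => hUC (γf n) (hγfpos n)
  obtain ⟨ηs, hηspos, hηsuc⟩ := hUC (ε/8) (by positivity)
  obtain ⟨cent, hcent'⟩ : ∃ cent : ℕ → ℝ, ∀ n, cent n = a + q * (1/4)^(n+2) := ⟨_, fun _ => rfl⟩
  obtain ⟨Hn, hHn'⟩ : ∃ Hn : ℕ → ℝ, ∀ n, Hn n = min (q * (1/4)^(n+3)) (η n) := ⟨_, fun _ => rfl⟩
  have hHpos : ∀ n, 0 < Hn n := fun n => by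
    rw [hHn' n]; exact lt_min (by positivity) (hηpos n)
  have hHq : ∀ n, Hn n ≤ q * (1/4)^(n+3) := fun n => by rw [hHn' n]; exact min_le_left _ _
  have hHη : ∀ n, Hn n ≤ η n := fun n => by rw [hHn' n]; exact min_le_right _ _
  obtain ⟨lam, hlam'⟩ : ∃ lam : ℕ → ℝ, ∀ n, lam n = Hn n / (2*R) := ⟨_, fun _ => rfl⟩
  have hlampos : ∀ n, 0 < lam n := fun n => by
    rw [hlam' n]; exact div_pos (hHpos n) (by linarith)
  obtain ⟨δf, hδf'⟩ : ∃ δf : ℕ → ℝ, ∀ n, δf n = γf n / (M n + 1) := ⟨_, fun _ => rfl⟩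
  have hδpos : ∀ n, 0 < δf n := fun n => by
    rw [hδf' n]; exact div_pos (hγfpos n) (by linarith [hM0 n])
  obtain ⟨mst, hmst⟩ : ∃ mst : ℝ, mst = a + q/2 := ⟨_, rfl⟩
  obtain ⟨Hst, hHstdef⟩ : ∃ Hst : ℝ, Hst = min (q/8) ηs := ⟨_, rfl⟩
  have hHstpos : 0 < Hst := by rw [hHstdef]; exact lt_min (by positivity) hηspos
  have hHstq : Hst ≤ q/8 := by rw [hHstdef]; exact min_le_left _ _
  have hHstη : Hst ≤ ηs := by rw [hHstdef]; exact min_le_right _ _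
  obtain ⟨β, hβdef⟩ : ∃ β : ℝ, β = (ε/8) / (Hst + 1) := ⟨_, rfl⟩
  have hβpos : 0 < β := by rw [hβdef]; exact div_pos (by positivity) (by linarith)
  -- pow facts
  have hp2 : ∀ n : ℕ, ((1:ℝ)/4)^(n+2) ≤ 1/16 := fun n => by
    calc ((1:ℝ)/4)^(n+2) ≤ ((1:ℝ)/4)^2 := pow_quarter_le (by omega)
      _ = 1/16 := by norm_num
  have hp3 : ∀ n : ℕ, ((1:ℝ)/4)^(n+3) ≤ 1/64 := fun n => by
    calc ((1:ℝ)/4)^(n+3) ≤ ((1:ℝ)/4)^3 := pow_quarter_le (by omega)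
      _ = 1/64 := by norm_num
  have hp32 : ∀ n : ℕ, ((1:ℝ)/4)^(n+3) ≤ ((1:ℝ)/4)^(n+2) := fun n => pow_quarter_le (by omega)
  have hq23 : ∀ n : ℕ, q * ((1:ℝ)/4)^(n+2) = 4 * (q * ((1:ℝ)/4)^(n+3)) := fun n => by
    rw [pow_succ]; ring
  have hq34 : ∀ n : ℕ, q * ((1:ℝ)/4)^(n+3) = 4 * (q * ((1:ℝ)/4)^(n+4)) := fun n => by
    rw [pow_succ]; ring
  -- windows inside [a, b]
  have hwin_sub : ∀ n, ∀ s : ℝ, |s - cent n| ≤ Hn n → s ∈ Set.Icc a b := by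
    intro n s hs
    obtain ⟨h1, h2⟩ := abs_le.mp hs
    have e1 : Hn n ≤ q * (1/4)^(n+3) := hHq n
    have e2 : q * (1/4)^(n+3) ≤ q * (1/4)^(n+2) :=
      mul_le_mul_of_nonneg_left (hp32 n) hqpos.le
    have e3 : q * (1/4)^(n+2) ≤ q * (1/16) := mul_le_mul_of_nonneg_left (hp2 n) hqpos.le
    have e4 : q * (1/4)^(n+3) ≤ q * (1/64) := mul_le_mul_of_nonneg_left (hp3 n) hqpos.le
    rw [hcent' n] at h1 h2
    exact ⟨by linarith, by linarith⟩
  have hstwin_sub : ∀ s : ℝ, |s - mst| ≤ Hst → s ∈ Set.Icc a b := by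
    intro s hs
    obtain ⟨h1, h2⟩ := abs_le.mp hs
    rw [hmst] at h1 h2
    exact ⟨by linarith, by linarith⟩
  -- bounds on window functions
  have hφn_bound : ∀ n t, |winfun σ (F n) (cent n) (Hn n) (δf n) (lam n) t| ≤ γf n + γf n := by
    intro n t
    apply winfun_bound σ (F n) (δf n) (lam n) (hHpos n) (hγfpos n).le (hγfpos n).le ?_ ?_ t
    · intro s hs
      have hc : cent n ∈ Set.Icc a b := hwin_sub n (cent n) (by
        simpa using (hHpos n).le)
      exact hηuc n (cent n) hc s (hwin_sub n s hs)
        (le_trans (by rw [abs_sub_comm]; exact hs) (hHη n))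
    · intro s hs
      have harg : |(s - cent n) / lam n| ≤ 2*R := by
        rw [abs_div, abs_of_pos (hlampos n), div_le_iff₀ (hlampos n)]
        calc |s - cent n| ≤ Hn n := hs
          _ = 2*R * lam n := by
              rw [hlam' n, mul_div_assoc']
              rw [eq_div_iff (by linarith : (2:ℝ)*R ≠ 0)]
              ring
      have hFb := hMb n _ harg
      rw [abs_mul, abs_of_pos (hδpos n)]
      calc δf n * |F n ((s - cent n)/lam n)| ≤ δf n * M n :=
            mul_le_mul_of_nonneg_left hFb (hδpos n).le
        _ ≤ γf n := by
            rw [hδf' n]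
            rw [div_mul_eq_mul_div, div_le_iff₀ (by linarith [hM0 n] : (0:ℝ) < M n + 1)]
            nlinarith [hγfpos n, hM0 n]
  have hφst_bound : ∀ t, |winfun σ id mst Hst β 1 t| ≤ ε/8 + ε/8 := by
    intro t
    apply winfun_bound σ id β 1 hHstpos (by positivity) (by positivity) ?_ ?_ t
    · intro s hs
      have hc : mst ∈ Set.Icc a b := hstwin_sub mst (by simpa using hHstpos.le)
      exact hηsuc mst hc s (hstwin_sub s hs)
        (le_trans (by rw [abs_sub_comm]; exact hs) hHstη)
    · intro s hs
      simp only [id_eq, div_one]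
      rw [abs_mul, abs_of_pos hβpos]
      calc β * |s - mst| ≤ β * Hst := mul_le_mul_of_nonneg_left hs hβpos.le
        _ ≤ ε/8 := by
            rw [hβdef, div_mul_eq_mul_div, div_le_iff₀ (by linarith : (0:ℝ) < Hst + 1)]
            nlinarith
  -- summability
  have hgeom : Summable (fun n : ℕ => ((1:ℝ)/2)^n) :=
    summable_geometric_of_lt_one (by norm_num) (by norm_num)
  have hsummable : Summable (fun n => γf n + γf n) := by
    have hfe : (fun n => γf n + γf n) = fun n : ℕ => (ε/4) * ((1:ℝ)/2)^n := by
      funext n; rw [hγf' n]; ring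
    rw [hfe]
    exact hgeom.mul_left _
  -- the total perturbation
  obtain ⟨g, hg'⟩ : ∃ g : ℝ → ℝ,
      ∀ t, g t = ∑' n, winfun σ (F n) (cent n) (Hn n) (δf n) (lam n) t := ⟨_, fun _ => rfl⟩
  have hgcont : Continuous g := by
    rw [funext hg']
    apply continuous_tsum (fun n => winfun_continuous _ _ hσc (hFcont n) _ _ _ _) hsummable
    intro n t
    simpa [Real.norm_eq_abs] using hφn_bound n t
  have hgabs : ∀ t, |g t| ≤ ε/2 := by
    intro t
    have h1 : |g t| ≤ ∑' n, (γf n + γf n) := by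
      rw [hg' t]
      exact abs_tsum_le hsummable (fun n => hφn_bound n t)
    have h3 : (∑' n, (γf n + γf n)) = ε/2 := by
      have hfe : (fun n => γf n + γf n) = fun n : ℕ => (ε/4) * ((1:ℝ)/2)^n := by
        funext n; rw [hγf' n]; ring
      rw [hfe, tsum_mul_left, tsum_geometric_of_lt_one (by norm_num) (by norm_num)]
      norm_num
      try ring
    linarith
  obtain ⟨σt, hσt'⟩ : ∃ σt : ℝ → ℝ,
      ∀ t, σt t = σ t + (winfun σ id mst Hst β 1 t + g t) := ⟨_, fun _ => rfl⟩
  have hσtc : Continuous σt := by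
    rw [funext hσt']
    exact hσc.add ((winfun_continuous σ id hσc continuous_id mst Hst β 1).add hgcont)
  -- disjointness
  have hd_n_st : ∀ n (t : ℝ), |t - cent n| ≤ Hn n → Hst ≤ |t - mst| := by
    intro n t ht
    obtain ⟨h1, h2⟩ := abs_le.mp ht
    have e4 : q * (1/4)^(n+3) ≤ q * (1/64) := mul_le_mul_of_nonneg_left (hp3 n) hqpos.le
    have e3 : q * (1/4)^(n+2) ≤ q * (1/16) := mul_le_mul_of_nonneg_left (hp2 n) hqpos.le
    have e1 : Hn n ≤ q * (1/4)^(n+3) := hHq n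
    refine le_abs.mpr (Or.inr ?_)
    rw [hcent' n] at h1 h2
    rw [hmst]
    linarith
  have hd_st_n : ∀ n (t : ℝ), |t - mst| ≤ Hst → Hn n ≤ |t - cent n| := by
    intro n t ht
    obtain ⟨h1, h2⟩ := abs_le.mp ht
    have e4 : q * (1/4)^(n+3) ≤ q * (1/64) := mul_le_mul_of_nonneg_left (hp3 n) hqpos.le
    have e3 : q * (1/4)^(n+2) ≤ q * (1/16) := mul_le_mul_of_nonneg_left (hp2 n) hqpos.le
    have e1 : Hn n ≤ q * (1/4)^(n+3) := hHq n
    refine le_abs.mpr (Or.inl ?_)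
    rw [hmst] at h1 h2
    rw [hcent' n]
    linarith
  have hd_nm : ∀ n m (t : ℝ), m ≠ n → |t - cent n| ≤ Hn n → Hn m ≤ |t - cent m| := by
    intro n m t hmn ht
    have hcd : |cent n - cent m| - Hn n ≤ |t - cent m| := by
      have htri := abs_sub_le (cent n) t (cent m)
      rw [abs_sub_comm (cent n) t] at htri
      linarith
    have e1 : Hn n ≤ q * (1/4)^(n+3) := hHq n
    have e2 : Hn m ≤ q * (1/4)^(m+3) := hHq m
    rcases lt_or_gt_of_ne hmn with hlt | hgt
    · -- m < n
      have hpow : ((1:ℝ)/4)^(n+2) ≤ ((1:ℝ)/4)^(m+3) := pow_quarter_le (by omega)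
      have hpow2 : ((1:ℝ)/4)^(n+3) ≤ ((1:ℝ)/4)^(m+4) := pow_quarter_le (by omega)
      have k1 : q * (1/4)^(n+2) ≤ q * (1/4)^(m+3) := mul_le_mul_of_nonneg_left hpow hqpos.le
      have k2 : q * (1/4)^(n+3) ≤ q * (1/4)^(m+4) := mul_le_mul_of_nonneg_left hpow2 hqpos.le
      have k3 : (0:ℝ) ≤ q * (1/4)^(m+4) := by positivity
      have hcc : |cent n - cent m| = q * (1/4)^(m+2) - q * (1/4)^(n+2) := by
        rw [abs_sub_comm, hcent' n, hcent' m, abs_of_nonneg]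
        · ring
        · have hm23 := hq23 m
          have k4 : (0:ℝ) ≤ q * (1/4)^(m+3) := by positivity
          simp only [add_sub_add_left_eq_sub]
          linarith
      have hm23 := hq23 m
      have hm34 := hq34 m
      linarith [hcd, hcc]
    · -- n < m
      have hpow : ((1:ℝ)/4)^(m+2) ≤ ((1:ℝ)/4)^(n+3) := pow_quarter_le (by omega)
      have hpow2 : ((1:ℝ)/4)^(m+3) ≤ ((1:ℝ)/4)^(n+4) := pow_quarter_le (by omega)
      have k1 : q * (1/4)^(m+2) ≤ q * (1/4)^(n+3) := mul_le_mul_of_nonneg_left hpow hqpos.le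
      have k2 : q * (1/4)^(m+3) ≤ q * (1/4)^(n+4) := mul_le_mul_of_nonneg_left hpow2 hqpos.le
      have k3 : (0:ℝ) ≤ q * (1/4)^(n+4) := by positivity
      have hcc : |cent n - cent m| = q * (1/4)^(n+2) - q * (1/4)^(m+2) := by
        rw [hcent' n, hcent' m, abs_of_nonneg]
        · ring
        · have hn23 := hq23 n
          have k4 : (0:ℝ) ≤ q * (1/4)^(n+3) := by positivity
          simp only [add_sub_add_left_eq_sub]
          linarith
      have hn23 := hq23 n
      have hn34 := hq34 n
      linarith [hcd, hcc]
  -- core evaluations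
  have hcore1 : ∀ n (s : ℝ), |s| ≤ R →
      σt (lam n * s + cent n) = σ (cent n) + δf n * F n s := by
    intro n s hs
    obtain ⟨t, htdef⟩ : ∃ t : ℝ, t = lam n * s + cent n := ⟨_, rfl⟩
    have htc0 : t - cent n = lam n * s := by rw [htdef]; ring
    have htc : |t - cent n| ≤ Hn n / 2 := by
      rw [htc0, abs_mul, abs_of_pos (hlampos n)]
      calc lam n * |s| ≤ lam n * R := mul_le_mul_of_nonneg_left hs (hlampos n).le
        _ ≤ Hn n / 2 := by
            rw [hlam' n, div_mul_eq_mul_div, div_le_iff₀ (by linarith : (0:ℝ) < 2*R)]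
            nlinarith [hHpos n, hRpos]
    have htc' : |t - cent n| ≤ Hn n := le_trans htc (by linarith [hHpos n])
    have hst0 : winfun σ id mst Hst β 1 t = 0 :=
      winfun_eq_zero _ _ _ _ hHstpos (hd_n_st n t htc')
    have hsum : g t = winfun σ (F n) (cent n) (Hn n) (δf n) (lam n) t := by
      rw [hg' t]
      exact tsum_eq_single n (fun m hm =>
        winfun_eq_zero _ _ _ _ (hHpos m) (hd_nm n m t hm htc'))
    have harg : (t - cent n) / lam n = s := by
      rw [htc0]
      exact mul_div_cancel_left₀ s (hlampos n).ne'
    rw [← htdef, hσt' t, hst0, hsum, winfun_core _ _ _ _ (hHpos n) htc, harg]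
    ring
  have hcore2 : ∀ t : ℝ, |t - mst| ≤ Hst/2 → σt t = σ mst + β * (t - mst) := by
    intro t ht
    have ht' : |t - mst| ≤ Hst := le_trans ht (by linarith)
    have hsum : g t = 0 := by
      rw [hg' t]
      have hz : ∀ m : ℕ, winfun σ (F m) (cent m) (Hn m) (δf m) (lam m) t = 0 := fun m =>
        winfun_eq_zero _ _ _ _ (hHpos m) (hd_st_n m t ht')
      rw [tsum_congr hz, tsum_zero]
    rw [hσt' t, hsum, winfun_core _ _ _ _ hHstpos ht]
    simp only [id_eq, div_one]
    ring
  -- conclusion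
  refine ⟨σt, hσtc, ?_, ?_, ?_⟩
  · -- coincide outside (a, b)
    intro s hs
    have hs' : s ≤ a ∨ b ≤ s := by
      by_contra hcon
      push_neg at hcon
      exact hs ⟨hcon.1, hcon.2⟩
    have hst0 : winfun σ id mst Hst β 1 s = 0 := by
      apply winfun_eq_zero _ _ _ _ hHstpos
      rcases hs' with h | h
      · refine le_abs.mpr (Or.inr ?_)
        rw [hmst]; linarith
      · refine le_abs.mpr (Or.inl ?_)
        rw [hmst]; linarith
    have hn0 : ∀ n, winfun σ (F n) (cent n) (Hn n) (δf n) (lam n) s = 0 := by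
      intro n
      apply winfun_eq_zero _ _ _ _ (hHpos n)
      have e1 : Hn n ≤ q * (1/4)^(n+3) := hHq n
      have e2 : q * (1/4)^(n+3) ≤ q * (1/4)^(n+2) :=
        mul_le_mul_of_nonneg_left (hp32 n) hqpos.le
      have e3 : q * (1/4)^(n+2) ≤ q * (1/16) := mul_le_mul_of_nonneg_left (hp2 n) hqpos.le
      have e4 : q * (1/4)^(n+3) ≤ q * (1/64) := mul_le_mul_of_nonneg_left (hp3 n) hqpos.le
      have e0 : (0:ℝ) < q * (1/4)^(n+2) := by positivity
      rcases hs' with h | h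
      · refine le_abs.mpr (Or.inr ?_)
        rw [hcent' n]; linarith
      · refine le_abs.mpr (Or.inl ?_)
        rw [hcent' n]; linarith
    have hg0 : g s = 0 := by
      rw [hg' s, tsum_congr hn0, tsum_zero]
    rw [hσt' s, hst0, hg0]
    ring
  · -- ε-closeness
    intro s
    have h1 : σ s - σt s = -(winfun σ id mst Hst β 1 s + g s) := by
      rw [hσt' s]; ring
    rw [h1, abs_neg]
    calc |winfun σ id mst Hst β 1 s + g s|
        ≤ |winfun σ id mst Hst β 1 s| + |g s| := abs_add_le _ _
      _ ≤ (ε/8 + ε/8) + ε/2 := add_le_add (hφst_bound s) (hgabs s)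
      _ < ε := by linarith
  · -- density
    have hmem : ∀ n, (u n) ∈ Set.range (Psi (fun _ => σt) w L (fun _ _ _ => hσtc) K) := by
      intro n
      obtain ⟨α, hα⟩ := net_exists hL hw0 hw σt K R
        (fun x hx => by rw [← he]; exact hKR x hx)
        (F n) (M n) (hM0 n)
        (fun s hs => hMb n s (by linarith))
        (cent n) (lam n) (δf n) (σ (cent n)) mst (Hst/2) β (σ mst)
        (hδpos n) (by linarith) hβpos
        (hcore1 n) hcore2
      refine ⟨α, ?_⟩
      ext x
      have h1 := hα x.1 x.2
      rw [← he] at h1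
      exact h1.trans (hFval n x.1 x.2)
    exact hudense.mono (Set.range_subset_iff.mpr hmem)
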